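/- Let $p$ be an MTP2 probability distribution on $\{-1,1\}^d$ and let $x \in \{-1,1\}^d$. If for every pair of indices $i,j$ the pair-marginal probability $p_{ij}(x_i,x_j) = \sum_{y: y_i = x_i, y_j = x_j} p(y)$ is strictly positive, then $p(x) > 0$. -/
import Mathlib


def IsProb {X : Type*} [Fintype X] (p : X → ℝ) : Prop :=
  (∀ x, 0 ≤ p x) ∧ ∑ x, p x = 1

def MTP2 {d : ℕ} (p : (Fin d → Bool) → ℝ) : Prop :=
  ∀ x y, p x * p y ≤ p (x ⊔ y) * p (x ⊓ y)

theorem stmt10 {d : ℕ} (hd : 2 ≤ d) (p : (Fin d → Bool) → ℝ)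
    (hp : IsProb p) (hm : MTP2 p) (x : Fin d → Bool)
    (h : ∀ i j : Fin d, i ≠ j →
      0 < ∑ y ∈ Finset.univ.filter (fun y : Fin d → Bool => y i = x i ∧ y j = x j), p y) :
    0 < p x := by
  classical
  obtain ⟨hnn, -⟩ := hp
  have clos : ∀ a b, 0 < p a → 0 < p b → 0 < p (a ⊔ b) ∧ 0 < p (a ⊓ b) := by
    intro a b ha hb
    have h1 : 0 < p (a ⊔ b) * p (a ⊓ b) := lt_of_lt_of_le (mul_pos ha hb) (hm a b)
    rcases mul_pos_iff.mp h1 with ⟨h2, h3⟩ | ⟨h2, h3⟩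
    · exact ⟨h2, h3⟩
    · exact absurd h2 (not_lt.mpr (hnn _))
  have hy : ∀ i j : Fin d, i ≠ j → ∃ y : Fin d → Bool,
      y i = x i ∧ y j = x j ∧ 0 < p y := by
    intro i j hij
    obtain ⟨y, hmem, hpos⟩ := Finset.exists_lt_of_sum_lt
      (show ∑ y ∈ Finset.univ.filter (fun y : Fin d → Bool => y i = x i ∧ y j = x j), (0:ℝ)
          < ∑ y ∈ Finset.univ.filter (fun y : Fin d → Bool => y i = x i ∧ y j = x j), p y by
        simpa using h i j hij)
    rw [Finset.mem_filter] at hmem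
    exact ⟨y, hmem.2.1, hmem.2.2, hpos⟩
  choose Y hY1 hY2 hY3 using hy
  set g : Fin d → Fin d → (Fin d → Bool) :=
    fun i j => if h : i = j then x else Y i j h with hg
  have hgfact : ∀ i j, j ∈ Finset.univ.erase i →
      (g i j) i = x i ∧ (g i j) j = x j ∧ 0 < p (g i j) := by
    intro i j hj
    have hne : i ≠ j := (Finset.ne_of_mem_erase hj).symm
    rw [hg]; simp only [dif_neg hne]
    exact ⟨hY1 i j hne, hY2 i j hne, hY3 i j hne⟩
  have ht : ∀ i : Fin d, (Finset.univ.erase i).Nonempty := by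
    intro i
    rw [← Finset.card_pos, Finset.card_erase_of_mem (Finset.mem_univ i),
      Finset.card_univ, Fintype.card_fin]
    omega
  set wt : Fin d → (Fin d → Bool) :=
    fun i => (Finset.univ.erase i).inf' (ht i) (g i) with hwt
  set ws : Fin d → (Fin d → Bool) :=
    fun i => (Finset.univ.erase i).sup' (ht i) (g i) with hws
  have hwt_pos : ∀ i, 0 < p (wt i) := by
    intro i
    refine Finset.inf'_induction (ht i) (g i) (fun a ha b hb => (clos a b ha hb).2)
      (fun j hj => (hgfact i j hj).2.2)
  have hws_pos : ∀ i, 0 < p (ws i) := by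
    intro i
    refine Finset.sup'_induction (ht i) (g i) (fun a ha b hb => (clos a b ha hb).1)
      (fun j hj => (hgfact i j hj).2.2)
  have hwt_diag : ∀ i, wt i i = x i := by
    intro i
    rw [hwt]
    simp only [Finset.inf'_apply]
    rw [Finset.inf'_congr (ht i) rfl (fun j hj => (hgfact i j hj).1)]
    exact Finset.inf'_const _ _
  have hws_diag : ∀ i, ws i i = x i := by
    intro i
    rw [hws]
    simp only [Finset.sup'_apply]
    rw [Finset.sup'_congr (ht i) rfl (fun j hj => (hgfact i j hj).1)]
    exact Finset.sup'_const _ _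
  have hwt_le : ∀ i j, j ≠ i → wt i j ≤ x j := by
    intro i j hji
    have hj : j ∈ Finset.univ.erase i := Finset.mem_erase.mpr ⟨hji, Finset.mem_univ j⟩
    have := Finset.inf'_le (g i) hj
    have h2 := this j
    rwa [(hgfact i j hj).2.1] at h2
  by_cases hA : (Finset.univ.filter (fun i => x i = true)).Nonempty
  · set A := Finset.univ.filter (fun i => x i = true) with hAdef
    have hz_pos : 0 < p (A.sup' hA wt) :=
      Finset.sup'_induction hA wt (fun a ha b hb => (clos a b ha hb).1) (fun j _ => hwt_pos j)
    have hz : A.sup' hA wt = x := by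
      funext j
      rw [Finset.sup'_apply]
      by_cases hj : x j = true
      · have hjA : j ∈ A := by rw [hAdef]; simp [hj]
        have h1 : wt j j ≤ A.sup' hA (fun i => wt i j) := Finset.le_sup' (fun i => wt i j) hjA
        rw [hwt_diag, hj] at h1
        rw [hj]
        exact le_antisymm (Bool.le_true _) h1
      · have hj' : x j = false := by simpa using hj
        have h1 : A.sup' hA (fun i => wt i j) ≤ false := by
          apply Finset.sup'_le
          intro i hiA
          have hxi : x i = true := by
            rw [hAdef] at hiA; simpa using hiA
          have hij : i ≠ j := by
            intro e; rw [e, hj'] at hxi; exact Bool.noConfusion hxi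
          have := hwt_le i j (Ne.symm hij)
          rwa [hj'] at this
        rw [hj']
        exact le_antisymm h1 (Bool.false_le _)
    rw [← hz]; exact hz_pos
  · have hne : Nonempty (Fin d) := ⟨⟨0, by omega⟩⟩
    have hu : (Finset.univ : Finset (Fin d)).Nonempty := Finset.univ_nonempty
    have hz_pos : 0 < p (Finset.univ.inf' hu ws) :=
      Finset.inf'_induction hu ws (fun a ha b hb => (clos a b ha hb).2) (fun j _ => hws_pos j)
    have hxall : ∀ i, x i = false := by
      intro i
      by_contra hxi
      exact hA ⟨i, by simp [eq_true_of_ne_false hxi]⟩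
    have hz : Finset.univ.inf' hu ws = x := by
      funext j
      rw [Finset.inf'_apply]
      have h1 : Finset.univ.inf' hu (fun i => ws i j) ≤ ws j j :=
        Finset.inf'_le _ (Finset.mem_univ j)
      rw [hws_diag, hxall j] at h1
      rw [hxall j]
      exact le_antisymm h1 (Bool.false_le _)
    rw [← hz]; exact hz_pos
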